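/- Let D = Σ λ_i E_ii be diagonal positive definite. The derivative of the Kubo-Mori metric satisfies dG(D)(Z)(X) = −Σ_{i,j,k} m_ijk (E_ii Z E_jj X E_kk + E_ii X E_jj Z E_kk), where m_ijk = ∫_0^∞ (λ_i+t)^{-1}(λ_j+t)^{-1}(λ_k+t)^{-1} dt and dG(D)(Z)(X) = −∫_0^∞ [(D+t)^{-1}Z(D+t)^{-1}X(D+t)^{-1} + (D+t)^{-1}X(D+t)^{-1}Z(D+t)^{-1}] dt. -/

import Mathlib

open MeasureTheory Matrix
attribute [local instance] Matrix.frobeniusNormedAddCommGroup Matrix.frobeniusNormedSpace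

theorem KM.intg_cube {a : ℝ} (ha : 0 < a) :
    IntegrableOn (fun t : ℝ => (a + t)⁻¹ * (a + t)⁻¹ * (a + t)⁻¹) (Set.Ioi 0) := by
  have hderiv : ∀ t ∈ Set.Ici (0:ℝ),
      HasDerivAt (fun t : ℝ => -(2⁻¹) * ((a + t) ^ 2)⁻¹)
        ((a + t)⁻¹ * (a + t)⁻¹ * (a + t)⁻¹) t := by
    intro t ht
    have ht' : (0:ℝ) ≤ t := ht
    have h1 : HasDerivAt (fun t : ℝ => a + t) 1 t := by
      simpa using (hasDerivAt_id t).const_add a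
    have h2 := ((h1.pow 2).inv (by show (a + t) ^ 2 ≠ 0; positivity)).const_mul (-(2⁻¹ : ℝ))
    refine h2.congr_deriv ?_
    have h0 : a + t ≠ 0 := by positivity
    simp only [Pi.pow_apply]
    field_simp
    ring
  have htend : Filter.Tendsto (fun t : ℝ => -(2⁻¹) * ((a + t) ^ 2)⁻¹)
      Filter.atTop (nhds 0) := by
    have : Filter.Tendsto (fun t : ℝ => ((a + t) ^ 2)⁻¹) Filter.atTop (nhds 0) := by
      apply Filter.Tendsto.inv_tendsto_atTop
      exact (Filter.tendsto_pow_atTop two_ne_zero).comp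
        (Filter.tendsto_atTop_add_const_left _ a Filter.tendsto_id)
    simpa using this.const_mul (-(2⁻¹ : ℝ))
  exact integrableOn_Ioi_deriv_of_nonneg' hderiv
    (fun t ht => by have := ht.out; positivity) htend

theorem KM.intf (a b c : ℝ) (ha : 0 < a) (hb : 0 < b) (hc : 0 < c) :
    IntegrableOn (fun t : ℝ => (a + t)⁻¹ * (b + t)⁻¹ * (c + t)⁻¹) (Set.Ioi 0) := by
  set m := min a (min b c) with hm
  have hm0 : 0 < m := lt_min ha (lt_min hb hc)
  have hma : m ≤ a := min_le_left _ _
  have hmb : m ≤ b := le_trans (min_le_right _ _) (min_le_left _ _)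
  have hmc : m ≤ c := le_trans (min_le_right _ _) (min_le_right _ _)
  refine (KM.intg_cube hm0).mono' ?_ ?_
  · apply ContinuousOn.aestronglyMeasurable ?_ measurableSet_Ioi
    refine ContinuousOn.mul (ContinuousOn.mul ?_ ?_) ?_ <;>
      exact ContinuousOn.inv₀ (by fun_prop) (fun t ht => by have := ht.out; positivity)
  · filter_upwards [ae_restrict_mem measurableSet_Ioi] with t ht
    have ht0 : (0:ℝ) < t := ht
    rw [Real.norm_eq_abs, abs_of_nonneg (by positivity)]
    gcongr

theorem KM.diag_triple (n : ℕ) (d e f : Fin n → ℝ) (A B : Matrix (Fin n) (Fin n) ℝ) :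
    diagonal d * A * diagonal e * B * diagonal f =
    ∑ i : Fin n, ∑ j : Fin n, ∑ k : Fin n, (d i * e j * f k) •
      (single i i 1 * A * single j j 1 * B * single k k 1) := by
  ext a b
  simp [Matrix.mul_apply, Matrix.diagonal_apply, Matrix.single, Matrix.sum_apply,
    Finset.mul_sum, Finset.sum_mul, ite_and]
  exact Finset.sum_congr rfl fun j _ => by ring

/-- For `D = diagonal λ` positive definite, the derivative of the Kubo-Mori metric,
`dG(D)(Z)(X) = −∫_0^∞ [(D+t)⁻¹Z(D+t)⁻¹X(D+t)⁻¹ + (D+t)⁻¹X(D+t)⁻¹Z(D+t)⁻¹] dt`,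
equals `−Σ_{i,j,k} m_ijk (E_ii Z E_jj X E_kk + E_ii X E_jj Z E_kk)`, with
`m_ijk = ∫_0^∞ (λi+t)⁻¹(λj+t)⁻¹(λk+t)⁻¹ dt`. -/
theorem kubo_mori_metric_derivative (n : ℕ) (l : Fin n → ℝ) (hl : ∀ i, 0 < l i)
    (X Z : Matrix (Fin n) (Fin n) ℝ) (hX : X.IsSymm) (hZ : Z.IsSymm) :
    let D : Matrix (Fin n) (Fin n) ℝ := Matrix.diagonal l
    let E : Fin n → Matrix (Fin n) (Fin n) ℝ := fun i => Matrix.single i i 1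
    let m3 : Fin n → Fin n → Fin n → ℝ := fun i j k =>
      ∫ t in Set.Ioi (0:ℝ), (l i + t)⁻¹ * (l j + t)⁻¹ * (l k + t)⁻¹;
    -(∫ t in Set.Ioi (0:ℝ),
        ((D + t • 1)⁻¹ * Z * (D + t • 1)⁻¹ * X * (D + t • 1)⁻¹ +
         (D + t • 1)⁻¹ * X * (D + t • 1)⁻¹ * Z * (D + t • 1)⁻¹)) =
      -(∑ i : Fin n, ∑ j : Fin n, ∑ k : Fin n,
        m3 i j k • (E i * Z * E j * X * E k + E i * X * E j * Z * E k)) := by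
  intro D E m3
  have hint : ∀ i j k : Fin n,
      IntegrableOn (fun t : ℝ => (l i + t)⁻¹ * (l j + t)⁻¹ * (l k + t)⁻¹) (Set.Ioi 0) :=
    fun i j k => KM.intf _ _ _ (hl i) (hl j) (hl k)
  have hinv : ∀ t ∈ Set.Ioi (0:ℝ),
      (D + t • 1)⁻¹ = diagonal (fun i => (l i + t)⁻¹) := by
    intro t ht
    have : D + t • (1 : Matrix (Fin n) (Fin n) ℝ) = diagonal (fun i => l i + t) := by
      rw [Matrix.smul_one_eq_diagonal]
      simp [D, Matrix.diagonal_add]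
    have ht' : (0:ℝ) < t := ht
    rw [this]
    apply Matrix.inv_eq_right_inv
    rw [Matrix.diagonal_mul_diagonal]
    rw [show (fun i => (l i + t) * (l i + t)⁻¹) = fun _ => (1:ℝ) from
      funext fun i => mul_inv_cancel₀ (by have := hl i; positivity)]
    exact Matrix.diagonal_one
  have key : Set.EqOn
      (fun t : ℝ => (D + t • 1)⁻¹ * Z * (D + t • 1)⁻¹ * X * (D + t • 1)⁻¹ +
         (D + t • 1)⁻¹ * X * (D + t • 1)⁻¹ * Z * (D + t • 1)⁻¹)
      (fun t : ℝ => ∑ i : Fin n, ∑ j : Fin n, ∑ k : Fin n,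
        ((l i + t)⁻¹ * (l j + t)⁻¹ * (l k + t)⁻¹) •
          (E i * Z * E j * X * E k + E i * X * E j * Z * E k)) (Set.Ioi 0) := by
    intro t ht
    simp only [hinv t ht, KM.diag_triple, ← Finset.sum_add_distrib, ← smul_add]
    rfl
  letI : TopologicalSpace (Matrix (Fin n) (Fin n) ℝ) :=
    (Matrix.frobeniusNormedAddCommGroup).toUniformSpace.toTopologicalSpace
  have h1 : ∀ i j k : Fin n,
      Integrable (fun t : ℝ => ((l i + t)⁻¹ * (l j + t)⁻¹ * (l k + t)⁻¹) •
        (E i * Z * E j * X * E k + E i * X * E j * Z * E k))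
        (volume.restrict (Set.Ioi 0)) :=
    fun i j k => (hint i j k).smul_const _
  congr 1
  rw [setIntegral_congr_fun measurableSet_Ioi key]
  rw [integral_finset_sum _ (fun i _ => integrable_finset_sum _
    (fun j _ => integrable_finset_sum _ (fun k _ => h1 i j k)))]
  refine Finset.sum_congr rfl fun i _ => ?_
  rw [integral_finset_sum _ (fun j _ => integrable_finset_sum _ (fun k _ => h1 i j k))]
  refine Finset.sum_congr rfl fun j _ => ?_
  rw [integral_finset_sum _ (fun k _ => h1 i j k)]
  refine Finset.sum_congr rfl fun k _ => ?_
  exact integral_smul_const _ _
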